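/- For every T > 0 and u₀, t ∈ ℝ with 1 + u₀/T > 0 and 1 + (u₀+t)/T > 0, one has the cocycle identity ω(u₀+t) = ω(u₀) · n(−t/(1+u₀/T)) · a( log(1+(u₀+t)/T) − log(1+u₀/T) ). -/

import Mathlib

open Real Matrix

/-- `n t = [[1, t], [0, 1]]`. -/
noncomputable def n (t : ℝ) : Matrix (Fin 2) (Fin 2) ℝ := !![1, t; 0, 1]

/-- `a y = [[e^{y/2}, 0], [0, e^{-y/2}]]`. -/
noncomputable def a (y : ℝ) : Matrix (Fin 2) (Fin 2) ℝ :=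
  !![Real.exp (y / 2), 0; 0, Real.exp (-y / 2)]

/-- `ω T u = [[(1+u/T)^{1/2}, -u(1+u/T)^{-1/2}], [0, (1+u/T)^{-1/2}]]`. -/
noncomputable def ω (T u : ℝ) : Matrix (Fin 2) (Fin 2) ℝ :=
  !![(1 + u / T) ^ ((1 : ℝ) / 2), -u * (1 + u / T) ^ (-(1 : ℝ) / 2);
     0, (1 + u / T) ^ (-(1 : ℝ) / 2)]

/-- Cocycle identity for the approximate horocycle. -/
theorem stmt6 (T : ℝ) (hT : 0 < T) (u₀ t : ℝ) (h₀ : 0 < 1 + u₀ / T)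
    (h₁ : 0 < 1 + (u₀ + t) / T) :
    ω T (u₀ + t) =
      ω T u₀ * n (-t / (1 + u₀ / T)) *
        a (Real.log (1 + (u₀ + t) / T) - Real.log (1 + u₀ / T)) := by
  rw [ω, ω, n, a, Matrix.mul_fin_two, Matrix.mul_fin_two]
  set A := 1 + u₀ / T with hA
  set B := 1 + (u₀ + t) / T with hB
  set y := Real.log B - Real.log A with hy
  have hAne : A ≠ 0 := ne_of_gt h₀
  have h1 : A ^ ((1:ℝ)/2) * Real.exp (y/2) = B ^ ((1:ℝ)/2) := by
    rw [Real.rpow_def_of_pos h₀, Real.rpow_def_of_pos h₁, ← Real.exp_add]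
    rw [hy]
    ring_nf
  have h3 : A ^ (-(1:ℝ)/2) * Real.exp (-y/2) = B ^ (-(1:ℝ)/2) := by
    rw [Real.rpow_def_of_pos h₀, Real.rpow_def_of_pos h₁, ← Real.exp_add]
    rw [hy]
    ring_nf
  have h2 : A ^ ((1:ℝ)/2) / A = A ^ (-(1:ℝ)/2) := by
    rw [show (-(1:ℝ)/2) = (1:ℝ)/2 - 1 by norm_num, Real.rpow_sub h₀, Real.rpow_one]
  ext i j
  fin_cases i <;> fin_cases j <;>
    simp only [Fin.zero_eta, Fin.mk_one, Fin.isValue, Matrix.cons_val', Matrix.cons_val_zero,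
      Matrix.cons_val_one, Matrix.head_cons, Matrix.empty_val', Matrix.cons_val_fin_one,
      Matrix.head_fin_const, Matrix.of_apply, mul_one, mul_zero, zero_mul, add_zero, zero_add]
  · exact h1.symm
  · calc -(u₀+t) * B ^ (-(1:ℝ)/2)
        = (-t - u₀) * (A ^ (-(1:ℝ)/2) * Real.exp (-y/2)) := by rw [h3]; ring
      _ = (A ^ ((1:ℝ)/2) / A * (-t) - u₀ * A ^ (-(1:ℝ)/2)) * Real.exp (-y/2) := by
          rw [h2]; ring
      _ = _ := by field_simp; ring
  · exact h3.symm
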